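/- Let A be an integral domain and I ⊆ A an invertible ideal. Then the ring homomorphism A → A_I := ⋃_{m ≥ 1} I^{-m} (union of the inverse fractional ideals inside the fraction field) is flat. -/

import Mathlib

open nonZeroDivisors

set_option maxHeartbeats 1000000

section Aux

open LinearMap TensorProduct Pointwise

/-- A directed (chain-indexed) supremum of flat submodules is flat. -/
lemma flat_iSup_of_chain {A M : Type*} [CommRing A] [AddCommGroup M] [Module A M]
    (f : ℕ →o Submodule A M) (hf : ∀ n, Module.Flat A (f n)) :
    Module.Flat A ↥(⨆ n, f n) := by
  rw [Module.Flat.iff_rTensor_injective']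
  intro P
  rw [injective_iff_map_eq_zero]
  intro x hx
  obtain ⟨s, rfl⟩ := TensorProduct.exists_finset x
  have h1 : ∀ p : {q // q ∈ s}, ∃ n, ((p.1.2 : M) ∈ f n) :=
    fun p => (Submodule.mem_iSup_of_chain f _).mp p.1.2.2
  choose k hk using h1
  set n : ℕ := Finset.univ.sup k with hn
  have hmem : ∀ p : {q // q ∈ s}, ((p.1.2 : M) ∈ f n) :=
    fun p => f.monotone (Finset.le_sup (Finset.mem_univ p)) (hk p)
  set incl : f n →ₗ[A] ↥(⨆ n, f n) := Submodule.inclusion (le_iSup f n) with hincl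
  set x' : P ⊗[A] (f n) := ∑ p ∈ s.attach, p.1.1 ⊗ₜ[A] (⟨(p.1.2 : M), hmem p⟩ : f n)
    with hx'
  have him : (lTensor P incl) x' = ∑ p ∈ s, p.1 ⊗ₜ[A] p.2 := by
    rw [hx', map_sum]
    rw [← Finset.sum_attach s (fun p => p.1 ⊗ₜ[A] p.2)]
    refine Finset.sum_congr rfl fun p _ => ?_
    rw [lTensor_tmul]
    congr 1
  have hc : (rTensor (↥(⨆ n, f n)) P.subtype).comp (lTensor P incl)
      = (lTensor A incl).comp (rTensor (f n) P.subtype) := by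
    rw [rTensor_comp_lTensor, lTensor_comp_rTensor]
  have h0 : (lTensor A incl) ((rTensor (f n) P.subtype) x') = 0 := by
    have := congrArg (fun g => g x') hc
    simp only [LinearMap.comp_apply] at this
    rw [← this, him, hx]
  have hinclinj : Function.Injective incl := Submodule.inclusion_injective _
  have h2 : (rTensor (f n) P.subtype) x' = 0 :=
    Module.Flat.lTensor_preserves_injective_linearMap incl hinclinj
      (by rw [h0, map_zero])
  have h3 : x' = 0 :=
    (Module.Flat.iff_rTensor_injective' (R := A) (M := f n)).mp (hf n) P
      (by rw [h2, map_zero])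
  rw [← him, h3, map_zero]

/-- A unit fractional ideal is flat as a module (it is in fact projective,
being a retract of a finite free module via a dual basis). -/
lemma flat_of_isUnit_fractionalIdeal {A : Type*} [CommRing A] [IsDomain A]
    (J : FractionalIdeal A⁰ (FractionRing A)) (hJ : IsUnit J) :
    Module.Flat A ↥(J : Submodule A (FractionRing A)) := by
  classical
  set K := FractionRing A
  haveI : DecidableEq K := Classical.decEq K
  have hmul : J * J⁻¹ = 1 := (FractionalIdeal.mul_inv_cancel_iff_isUnit K).mpr hJ
  have h1 : (1 : K) ∈ (J : Submodule A K) * ((J⁻¹ : FractionalIdeal A⁰ K) : Submodule A K) := by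
    rw [← FractionalIdeal.coe_mul, hmul, FractionalIdeal.coe_one]
    exact Submodule.one_le.mp le_rfl
  obtain ⟨T, T', hT, hT', hspan⟩ := Submodule.mem_span_mul_finite_of_mem_mul h1
  rw [← Finset.coe_mul] at hspan
  obtain ⟨c, -, hc⟩ := Submodule.mem_span_finset.mp hspan
  have hrep : ∀ y ∈ T * T', ∃ ab : K × K, ab.1 ∈ (J : Submodule A K) ∧
      ab.2 ∈ ((J⁻¹ : FractionalIdeal A⁰ K) : Submodule A K) ∧ ab.1 * ab.2 = y := by
    intro y hy
    rcases Finset.mem_mul.mp hy with ⟨a, ha, b, hb, rfl⟩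
    exact ⟨(a, b), hT ha, hT' hb, rfl⟩
  choose ab hab1 hab2 hab3 using hrep
  set ι := {y // y ∈ T * T'}
  set fv : ι → K := fun i => c i.1 • (ab i.1 i.2).1 with hfv
  set gv : ι → K := fun i => (ab i.1 i.2).2 with hgv
  have hfJ : ∀ i : ι, fv i ∈ (J : Submodule A K) :=
    fun i => Submodule.smul_mem _ _ (hab1 i.1 i.2)
  have hgJ : ∀ i : ι, gv i ∈ ((J⁻¹ : FractionalIdeal A⁰ K) : Submodule A K) :=
    fun i => hab2 i.1 i.2
  have key : ∑ i : ι, fv i * gv i = 1 := by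
    rw [← hc, ← Finset.sum_attach (T * T') (fun y => c y • y)]
    refine Finset.sum_congr rfl fun i _ => ?_
    rw [hfv, hgv, smul_mul_assoc, hab3 i.1 i.2]
  -- the retraction data
  set M : Submodule A K := (J : Submodule A K) with hM
  set alg : A →ₗ[A] K := Algebra.linearMap A K with halg
  have hinj : Function.Injective alg := IsFractionRing.injective A K
  set e : A ≃ₗ[A] LinearMap.range alg := LinearEquiv.ofInjective alg hinj with he
  have hrange : ∀ (i : ι) (x : M), gv i * (x : K) ∈ LinearMap.range alg := by
    intro i x
    have : gv i * (x : K) ∈ ((J⁻¹ : FractionalIdeal A⁰ K) : Submodule A K) * (J : Submodule A K) :=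
      Submodule.mul_mem_mul (hgJ i) x.2
    rw [← FractionalIdeal.coe_mul, mul_comm J⁻¹ J, hmul, FractionalIdeal.coe_one,
      Submodule.one_eq_range] at this
    exact this
  set mj : ∀ i : ι, M →ₗ[A] ↥(LinearMap.range alg) := fun i =>
    LinearMap.codRestrict _ ((LinearMap.mulLeft A (gv i)).comp M.subtype)
      (fun x => hrange i x) with hmj
  set sM : M →ₗ[A] (ι → A) := LinearMap.pi (fun i => (e.symm.toLinearMap).comp (mj i))
    with hsM
  set rM : (ι → A) →ₗ[A] M :=
    ∑ i : ι, (LinearMap.proj i : (ι → A) →ₗ[A] A).smulRight (⟨fv i, hfJ i⟩ : M)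
    with hrM
  have hsect : rM.comp sM = LinearMap.id := by
    ext x
    have hrx : ∀ v : ι → A, ((rM v : M) : K) = ∑ i : ι, v i • fv i := by
      intro v
      rw [hrM]
      rw [LinearMap.sum_apply]
      rw [Submodule.coe_sum]
      refine Finset.sum_congr rfl fun i _ => ?_
      simp
    have hsx : ∀ i : ι, alg (sM x i) = gv i * (x : K) := by
      intro i
      have : (e (sM x i) : K) = gv i * (x : K) := by
        rw [hsM]
        simp only [LinearMap.pi_apply, LinearMap.comp_apply, LinearEquiv.coe_coe,
          LinearEquiv.apply_symm_apply]
        rfl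
      rw [← this]
      rfl
    have : ((rM (sM x) : M) : K) = (x : K) := by
      rw [hrx]
      have : ∀ i : ι, (sM x i) • fv i = (gv i * (x : K)) * fv i := by
        intro i
        rw [Algebra.smul_def, ← hsx i]
        rfl
      rw [Finset.sum_congr rfl (fun i _ => this i)]
      calc ∑ i : ι, gv i * (x : K) * fv i = (∑ i : ι, fv i * gv i) * (x : K) := by
            rw [Finset.sum_mul]
            exact Finset.sum_congr rfl fun i _ => by ring
        _ = (x : K) := by rw [key, one_mul]
    simpa only [LinearMap.comp_apply, LinearMap.id_apply] using this
  exact Module.Flat.of_retract sM rM hsect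

end Aux

/-- Let `A` be an integral domain and `I ⊆ A` an invertible ideal.  Then the ring
homomorphism `A → A_I := ⋃_{m ≥ 1} I^{-m}` (the subalgebra of the fraction field
generated by the inverse fractional ideal `I⁻¹`) is flat. -/
theorem flat_of_invert_ideal
    (A : Type*) [CommRing A] [IsDomain A]
    (I : Ideal A) (hI : IsUnit (I : FractionalIdeal A⁰ (FractionRing A))) :
    Module.Flat A
      (Algebra.adjoin A
        (((I : FractionalIdeal A⁰ (FractionRing A))⁻¹ :
            FractionalIdeal A⁰ (FractionRing A)) : Set (FractionRing A))) := by
  classical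
  set K := FractionRing A
  set J : FractionalIdeal A⁰ K := (I : FractionalIdeal A⁰ K)⁻¹ with hJdef
  have hmulJ : (I : FractionalIdeal A⁰ K) * J = 1 :=
    (FractionalIdeal.mul_inv_cancel_iff_isUnit K).mpr hI
  have hJ : IsUnit J := IsUnit.of_mul_eq_one _ (by rw [mul_comm]; exact hmulJ)
  have h1J : 1 ≤ J := by
    calc (1 : FractionalIdeal A⁰ K) = (I : FractionalIdeal A⁰ K) * J := hmulJ.symm
      _ = J * (I : FractionalIdeal A⁰ K) := mul_comm _ _
      _ ≤ J * 1 := by gcongr; exact FractionalIdeal.coeIdeal_le_one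
      _ = J := mul_one J
  -- the chain of powers
  have hmono : Monotone (fun n : ℕ => ((J ^ n : FractionalIdeal A⁰ K) : Submodule A K)) := by
    have hstep : ∀ n : ℕ, ((J ^ n : FractionalIdeal A⁰ K) : Submodule A K) ≤
        ((J ^ (n + 1) : FractionalIdeal A⁰ K) : Submodule A K) := by
      intro n
      rw [FractionalIdeal.coe_le_coe]
      calc J ^ n = J ^ n * 1 := (mul_one _).symm
        _ ≤ J ^ n * J := by gcongr
        _ = J ^ (n + 1) := (pow_succ J n).symm
    exact monotone_nat_of_le_succ hstep
  set f : ℕ →o Submodule A K :=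
    ⟨fun n => ((J ^ n : FractionalIdeal A⁰ K) : Submodule A K), hmono⟩ with hf
  -- the adjoin equals the union of powers
  have hone : (1 : K) ∈ ⨆ n, f n := by
    rw [Submodule.mem_iSup_of_chain]
    exact ⟨0, by simp [hf, FractionalIdeal.coe_one, Submodule.one_le.mp le_rfl]⟩
  have hmulmem : ∀ x y : K, x ∈ (⨆ n, f n) → y ∈ (⨆ n, f n) → x * y ∈ ⨆ n, f n := by
    intro x y hx hy
    rw [Submodule.mem_iSup_of_chain] at hx hy ⊢
    obtain ⟨m, hm⟩ := hx
    obtain ⟨k, hk⟩ := hy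
    refine ⟨m + k, ?_⟩
    have : x * y ∈ ((J ^ m : FractionalIdeal A⁰ K) : Submodule A K) *
        ((J ^ k : FractionalIdeal A⁰ K) : Submodule A K) := Submodule.mul_mem_mul hm hk
    rwa [← FractionalIdeal.coe_mul, ← pow_add] at this
  set S : Subalgebra A K := Submodule.toSubalgebra (⨆ n, f n) hone hmulmem with hS
  have hAdj : Algebra.adjoin A (J : Set K) = S := by
    apply le_antisymm
    · apply Algebra.adjoin_le
      intro x hx
      have : x ∈ ((J ^ 1 : FractionalIdeal A⁰ K) : Submodule A K) := by
        rwa [pow_one]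
      exact (Submodule.mem_iSup_of_chain f x).mpr ⟨1, this⟩
    · intro x hx
      have hx' : x ∈ ⨆ n, f n := hx
      rw [Submodule.mem_iSup_of_chain] at hx'
      obtain ⟨n, hn⟩ := hx'
      clear hx
      induction n generalizing x with
      | zero =>
        simp only [hf, OrderHom.coe_mk, pow_zero, FractionalIdeal.coe_one] at hn
        rw [Submodule.one_eq_range] at hn
        obtain ⟨a, rfl⟩ := hn
        exact (Algebra.adjoin A (J : Set K)).algebraMap_mem a
      | succ m ih =>
        simp only [hf, OrderHom.coe_mk] at hn
        rw [pow_succ, FractionalIdeal.coe_mul] at hn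
        have hn' : x ∈ ((J ^ m : FractionalIdeal A⁰ K) : Submodule A K) *
            ((J : FractionalIdeal A⁰ K) : Submodule A K) := hn
        refine Submodule.mul_induction_on hn' ?_ ?_
        · intro a ha b hb
          exact mul_mem (ih (show a ∈ f m from ha)) (Algebra.subset_adjoin hb)
        · intro a b ha hb
          exact add_mem ha hb
  -- each power is flat
  have hflat : ∀ n, Module.Flat A (f n) :=
    fun n => flat_of_isUnit_fractionalIdeal (J ^ n) (hJ.pow n)
  have hunion : Module.Flat A ↥(⨆ n, f n) := flat_iSup_of_chain f hflat
  have heq : Subalgebra.toSubmodule (Algebra.adjoin A (J : Set K)) = ⨆ n, f n := by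
    rw [hAdj]; rfl
  exact Module.Flat.of_linearEquiv (LinearEquiv.ofEq _ _ heq)
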